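/- arXiv:1201.4662 — 4 statements merged into one kernel-verified Lean document; each statement's English description precedes it below -/
import Mathlib

section
/- Let E be a finite set, let A1, A2 ⊆ E and let a1, a2 be natural numbers with a1 < |A1|. Then {I ⊆ E : |I ∩ A2| ≤ a2} ⊆ {I ⊆ E : |I ∩ A1| ≤ a1} if and only if |A1 \ A2| + a2 ≤ a1. -/
/-- For a finite ground set `E`, subsets `A₁, A₂ ⊆ E` and naturals `a₁, a₂` with
`a₁ < |A₁|`, the linear inequality `(A₂, a₂)_≤` implies `(A₁, a₁)_≤` on subsets of `E`
if and only if `|A₁ \ A₂| + a₂ ≤ a₁`. -/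
theorem linear_inequality_subset_iff {α : Type*} [DecidableEq α]
    (E A₁ A₂ : Finset α) (a₁ a₂ : ℕ) (hA₁ : A₁ ⊆ E) (hA₂ : A₂ ⊆ E)
    (ha₁ : a₁ < A₁.card) :
    (∀ I ⊆ E, (I ∩ A₂).card ≤ a₂ → (I ∩ A₁).card ≤ a₁) ↔
      (A₁ \ A₂).card + a₂ ≤ a₁ := by
  constructor
  · intro h
    by_contra hlt
    push_neg at hlt
    obtain ⟨S, hS, hScard⟩ := Finset.exists_subset_card_eq (s := A₁ ∩ A₂)
      (n := min a₂ (A₁ ∩ A₂).card) (min_le_right _ _)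
    set I := (A₁ \ A₂) ∪ S with hI
    have hSA₂ : S ⊆ A₂ := hS.trans (Finset.inter_subset_right)
    have hIA₁ : I ⊆ A₁ := Finset.union_subset Finset.sdiff_subset
      (hS.trans Finset.inter_subset_left)
    have hIE : I ⊆ E := hIA₁.trans hA₁
    have hdisj : Disjoint (A₁ \ A₂) S :=
      Finset.disjoint_left.2 fun x hx hxS => (Finset.mem_sdiff.1 hx).2 (hSA₂ hxS)
    have hI2 : I ∩ A₂ = S := by
      ext x
      simp only [hI, Finset.mem_inter, Finset.mem_union, Finset.mem_sdiff]
      constructor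
      · rintro ⟨h1 | h1, h2⟩
        · exact absurd h2 h1.2
        · exact h1
      · intro hx; exact ⟨Or.inr hx, hSA₂ hx⟩
    have hI1 : I ∩ A₁ = I := Finset.inter_eq_left.2 hIA₁
    have hcard : I.card = (A₁ \ A₂).card + S.card := Finset.card_union_of_disjoint hdisj
    have := h I hIE (by rw [hI2, hScard]; exact min_le_left _ _)
    rw [hI1, hcard, hScard] at this
    rcases le_or_gt a₂ (A₁ ∩ A₂).card with hc | hc
    · rw [min_eq_left hc] at this
      exact absurd this (not_le.2 hlt)
    · rw [min_eq_right hc.le] at this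
      rw [Finset.card_sdiff_add_card_inter] at this
      exact absurd this (not_le.2 ha₁)
  · intro h I hIE hI2
    have hsub : I ∩ A₁ ⊆ (I ∩ A₂) ∪ (A₁ \ A₂) := by
      intro x hx
      rw [Finset.mem_inter] at hx
      by_cases hx2 : x ∈ A₂
      · exact Finset.mem_union_left _ (Finset.mem_inter.2 ⟨hx.1, hx2⟩)
      · exact Finset.mem_union_right _ (Finset.mem_sdiff.2 ⟨hx.2, hx2⟩)
    calc (I ∩ A₁).card ≤ ((I ∩ A₂) ∪ (A₁ \ A₂)).card := Finset.card_le_card hsub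
      _ ≤ (I ∩ A₂).card + (A₁ \ A₂).card := Finset.card_union_le _ _
      _ ≤ a₂ + (A₁ \ A₂).card := by omega
      _ ≤ a₁ := by omega
end

section
/- Let M1 and M2 be matroids on a common finite ground set E with rank functions r1 and r2 respectively, and assume r1(E) = r2(E). Then every base of M2 is a base of M1 if and only if r2(A) ≤ r1(A) for all A ⊆ E. -/
open Set Matroid

namespace PaperWMO

variable {α : Type*}

/-- The rank of a set `X` in a matroid `M`: the size of a largest independent subset of `X`. -/
noncomputable def rk (M : Matroid α) (X : Set α) : ℕ :=
  sSup {n : ℕ | ∃ I, M.Indep I ∧ I ⊆ X ∧ I.ncard = n}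

/-- Contraction of the set `C` in the matroid `M`, defined by duality:
`M / C = (M✶ \ C)✶`, where deletion is restriction to the complement. -/
noncomputable def contract (M : Matroid α) (C : Set α) : Matroid α :=
  (M✶ ↾ (M.E \ C))✶

/-- A matroid is connected if its ground set is nonempty and it is not the direct sum of
two matroids on nonempty disjoint ground sets. -/
def Conn (M : Matroid α) : Prop :=
  M.E.Nonempty ∧ ¬ ∃ (M₁ M₂ : Matroid α) (h : Disjoint M₁.E M₂.E),
    M₁.E.Nonempty ∧ M₂.E.Nonempty ∧ M = Matroid.disjointSum M₁ M₂ h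

/-- A flat of `M`: a subset `F` of the ground set such that any superset
`B` with `F ⊆ B ⊆ M.E` of the same rank equals `F`. -/
def IsFlat (M : Matroid α) (F : Set α) : Prop :=
  F ⊆ M.E ∧ ∀ B : Set α, F ⊆ B → B ⊆ M.E → rk M B = rk M F → B = F

/-- A matroid is simple if every subset of the ground set with at most two elements
is independent. -/
def IsSimple (M : Matroid α) : Prop :=
  ∀ X ⊆ M.E, X.ncard ≤ 2 → M.Indep X

/-- A facet-defining flat of rank 2: a flat `F` of rank 2 such that
both the restriction `M ↾ F` and the contraction `M / F` are connected. -/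
def FacetFlat2 (M : Matroid α) (F : Set α) : Prop :=
  IsFlat M F ∧ rk M F = 2 ∧ Conn (M ↾ F) ∧ Conn (contract M F)

/-- `M` is 2-decomposable by the hyperplane `(A, a)_=`. -/
def TwoDecomposableBy (M : Matroid α) (A : Set α) (a : ℕ) : Prop :=
  (∃ N₁ : Matroid α, N₁.E = M.E ∧
      ∀ B : Set α, N₁.IsBase B ↔ M.IsBase B ∧ (B ∩ A).ncard ≤ a) ∧
  (∃ N₂ : Matroid α, N₂.E = M.E ∧
      ∀ B : Set α, N₂.IsBase B ↔ M.IsBase B ∧ a ≤ (B ∩ A).ncard) ∧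
  (∃ B : Set α, M.IsBase B ∧ a < (B ∩ A).ncard) ∧
  (∃ B : Set α, M.IsBase B ∧ (B ∩ A).ncard < a)

/-- A 3-partition in `M`: a partition of the ground set into three parts, each of size
at least two, such that no facet-defining flat of rank 2 meets all three parts, and the
union of any two parts has rank 3. -/
def ThreePartition (M : Matroid α) (A₁ A₂ A₃ : Set α) : Prop :=
  A₁ ∪ A₂ ∪ A₃ = M.E ∧
  Disjoint A₁ A₂ ∧ Disjoint A₂ A₃ ∧ Disjoint A₁ A₃ ∧
  2 ≤ A₁.ncard ∧ 2 ≤ A₂.ncard ∧ 2 ≤ A₃.ncard ∧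
  (¬ ∃ F : Set α, FacetFlat2 M F ∧
      (F ∩ A₁).Nonempty ∧ (F ∩ A₂).Nonempty ∧ (F ∩ A₃).Nonempty) ∧
  rk M (A₁ ∪ A₂) = 3 ∧ rk M (A₂ ∪ A₃) = 3 ∧ rk M (A₃ ∪ A₁) = 3

/-- The adjacency relation of the graph `g(A, B)` (with respect to the matroid `M`):
the vertex set is `B`, and distinct `x, y ∈ B` are adjacent iff some facet-defining flat
of rank 2 of `M` contains both `x` and `y` and meets `A`. -/
def gAdj (M : Matroid α) (A B : Set α) (x y : α) : Prop :=
  x ∈ B ∧ y ∈ B ∧ x ≠ y ∧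
    ∃ F : Set α, FacetFlat2 M F ∧ x ∈ F ∧ y ∈ F ∧ (F ∩ A).Nonempty

/-- `C` is the vertex set of a connected component of the graph `g(S, V)`. -/
def IsGComponent (M : Matroid α) (S V C : Set α) : Prop :=
  ∃ x ∈ V, C = {y | y ∈ V ∧ Relation.ReflTransGen (gAdj M S V) x y}

lemma bdd_aux (M : Matroid α) (hfin : M.E.Finite) (X : Set α) :
    BddAbove {n : ℕ | ∃ I, M.Indep I ∧ I ⊆ X ∧ I.ncard = n} :=
  ⟨M.E.ncard, fun n ⟨I, hI, _, h⟩ => h ▸ ncard_le_ncard hI.subset_ground hfin⟩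

lemma mem_aux (M : Matroid α) (X : Set α) {I : Set α} (hI : M.Indep I) (hIX : I ⊆ X) :
    I.ncard ∈ {n : ℕ | ∃ I, M.Indep I ∧ I ⊆ X ∧ I.ncard = n} := ⟨I, hI, hIX, rfl⟩

lemma le_rk (M : Matroid α) (hfin : M.E.Finite) {X I : Set α} (hI : M.Indep I)
    (hIX : I ⊆ X) : I.ncard ≤ rk M X :=
  le_csSup (bdd_aux M hfin X) (mem_aux M X hI hIX)

lemma rk_le (M : Matroid α) {X : Set α} {n : ℕ}
    (h : ∀ I, M.Indep I → I ⊆ X → I.ncard ≤ n) : rk M X ≤ n :=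
  csSup_le ⟨0, ∅, M.empty_indep, empty_subset X, by simp⟩
    (fun m ⟨I, hI, hIX, hm⟩ => hm ▸ h I hI hIX)

lemma exists_rk (M : Matroid α) (hfin : M.E.Finite) (X : Set α) :
    ∃ I, M.Indep I ∧ I ⊆ X ∧ I.ncard = rk M X :=
  Nat.sSup_mem (s := {n : ℕ | ∃ I, M.Indep I ∧ I ⊆ X ∧ I.ncard = n})
    ⟨0, ∅, M.empty_indep, empty_subset X, by simp⟩ (bdd_aux M hfin X)

lemma rk_ground_eq (M : Matroid α) (hfin : M.E.Finite) {B : Set α} (hB : M.IsBase B) :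
    rk M M.E = B.ncard := by
  refine le_antisymm (rk_le M fun I hI _ => ?_) (le_rk M hfin hB.indep hB.subset_ground)
  obtain ⟨B', hB', hIB'⟩ := hI.exists_isBase_superset
  have hfB' : B'.Finite := hfin.subset hB'.subset_ground
  calc I.ncard ≤ B'.ncard := ncard_le_ncard hIB' hfB'
    _ = B.ncard := by
        rw [ncard_def, ncard_def, hB'.encard_eq_encard_of_isBase hB]


/-- Weak-map order and rank functions: for matroids `M₁, M₂` on a common finite ground set
with the same rank, every base of `M₂` is a base of `M₁` iff `rk M₂ A ≤ rk M₁ A` for all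
`A ⊆ E`. -/
theorem base_subset_iff_rank_le (M₁ M₂ : Matroid α)
    (hE : M₂.E = M₁.E) (hfin : M₁.E.Finite)
    (hr : rk M₂ M₂.E = rk M₁ M₁.E) :
    (∀ B : Set α, M₂.IsBase B → M₁.IsBase B) ↔
      ∀ A ⊆ M₁.E, rk M₂ A ≤ rk M₁ A := by
  have hfin2 : M₂.E.Finite := by rw [hE]; exact hfin
  constructor
  · intro h A _
    refine rk_le M₂ fun I hI hIX => ?_
    obtain ⟨B, hB, hIB⟩ := hI.exists_isBase_superset
    exact le_rk M₁ hfin (((h B hB).indep).subset hIB) hIX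
  · intro h B hB
    have hBE : B ⊆ M₁.E := hE ▸ hB.subset_ground
    have hBfin : B.Finite := hfin.subset hBE
    have h1 : B.ncard ≤ rk M₁ B :=
      le_trans (le_rk M₂ hfin2 hB.indep subset_rfl) (h B hBE)
    obtain ⟨I, hI, hIB, hIcard⟩ := exists_rk M₁ hfin B
    have hIeq : I = B :=
      eq_of_subset_of_ncard_le hIB (hIcard ▸ h1) hBfin
    have hBindep : M₁.Indep B := hIeq ▸ hI
    obtain ⟨B', hB', hBB'⟩ := hBindep.exists_isBase_superset
    have hcard : B'.ncard ≤ B.ncard := by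
      rw [← rk_ground_eq M₁ hfin hB', ← hr, rk_ground_eq M₂ hfin2 hB]
    have : B = B' :=
      eq_of_subset_of_ncard_le hBB' hcard (hfin.subset hB'.subset_ground)
    exact this ▸ hB'

end PaperWMO
end

section
/- Let M be a loopless matroid on a finite ground set E with rank function r, let A ⊆ E be a set that is not a flat of M, and let cl(A) denote the closure of A in M. Then the family {I : I independent in M and |I ∩ A| = r(A)} is a proper subset of the family {I : I independent in M and |I ∩ cl(A)| = r(A)}. (In particular, the face of the independence system defined by (A, r(A))_= is strictly contained in the face defined by (cl(A), r(cl(A)))_=, so (A, r(A))_≤ is not facet-defining.) -/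
open Set Matroid

namespace PaperWMO

variable {α : Type*}

/-- The smallest flat of `M` containing `A` (the closure of `A`). -/
def closureOf (M : Matroid α) (A : Set α) : Set α :=
  ⋂₀ {F : Set α | IsFlat M F ∧ A ⊆ F}


lemma flat_closure (M : Matroid α) (X : Set α) : M.IsFlat (M.closure X) := by
  rw [closure_eq_subtypeClosure]
  exact isClosed_iff_isFlat.1 (M.subtypeClosure.isClosed_closure _)

lemma ncard_le_of_indep_subset {M : Matroid α} (hfin : M.E.Finite) {I X J : Set α}
    (hI : M.IsBasis I X) (hX : X ⊆ M.E) (hJ : M.Indep J) (hJX : J ⊆ X) : J.ncard ≤ I.ncard := by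
  obtain ⟨I', hI', hJI'⟩ := hJ.subset_isBasis_of_subset hJX hX
  have hcard := hI'.encard_eq_encard hI
  have hfinI' : I'.Finite := hfin.subset hI'.indep.subset_ground
  calc J.ncard ≤ I'.ncard := Set.ncard_le_ncard hJI' hfinI'
    _ = I.ncard := by rw [Set.ncard_def, hcard, ← Set.ncard_def]

lemma rk_eq_basis_ncard {M : Matroid α} (hfin : M.E.Finite) {I X : Set α}
    (hI : M.IsBasis I X) (hX : X ⊆ M.E) : rk M X = I.ncard := by
  apply le_antisymm
  · refine csSup_le ⟨0, ∅, M.empty_indep, empty_subset _, by simp⟩ ?_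
    rintro n ⟨J, hJ, hJX, rfl⟩
    exact ncard_le_of_indep_subset hfin hI hX hJ hJX
  · refine le_csSup ⟨I.ncard, ?_⟩ ⟨I, hI.indep, hI.subset, rfl⟩
    rintro n ⟨J, hJ, hJX, rfl⟩
    exact ncard_le_of_indep_subset hfin hI hX hJ hJX

lemma rk_closure_eq {M : Matroid α} (hfin : M.E.Finite) {A : Set α} (hA : A ⊆ M.E) :
    rk M (M.closure A) = rk M A := by
  obtain ⟨I, hI⟩ := M.exists_isBasis A hA
  rw [rk_eq_basis_ncard hfin hI hA,
    rk_eq_basis_ncard hfin hI.isBasis_closure_right (M.closure_subset_ground A)]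

lemma subset_closure_of_rk_eq {M : Matroid α} (hfin : M.E.Finite) {F B : Set α}
    (hFB : F ⊆ B) (hBE : B ⊆ M.E) (hr : rk M B = rk M F) : B ⊆ M.closure F := by
  have hFE : F ⊆ M.E := hFB.trans hBE
  obtain ⟨I, hI⟩ := M.exists_isBasis F hFE
  obtain ⟨J, hJ, hIJ⟩ := hI.indep.subset_isBasis_of_subset (hI.subset.trans hFB) hBE
  have hJfin : J.Finite := hfin.subset hJ.indep.subset_ground
  have hIJ' : I = J := by
    refine Set.eq_of_subset_of_ncard_le hIJ ?_ hJfin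
    rw [← rk_eq_basis_ncard hfin hI hFE, ← rk_eq_basis_ncard hfin hJ hBE, hr]
  have := hJ.subset_closure
  rwa [← hIJ', hI.closure_eq_closure] at this

lemma isFlat_iff_flat {M : Matroid α} (hfin : M.E.Finite) {F : Set α} :
    IsFlat M F ↔ M.IsFlat F := by
  constructor
  · rintro ⟨hFE, h⟩
    have h1 : M.closure F = F :=
      h _ (M.subset_closure F hFE) (M.closure_subset_ground F) (rk_closure_eq hfin hFE)
    exact h1 ▸ flat_closure M F
  · intro hF
    refine ⟨hF.subset_ground, fun B hFB hBE hr => ?_⟩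
    have := subset_closure_of_rk_eq hfin hFB hBE hr
    rw [hF.closure] at this
    exact this.antisymm hFB

lemma closureOf_eq {M : Matroid α} (hfin : M.E.Finite) {A : Set α} (hA : A ⊆ M.E) :
    closureOf M A = M.closure A := by
  rw [closureOf, M.closure_def' A hA]
  apply congrArg sInter
  ext F
  simp only [mem_setOf_eq]
  exact and_congr_left' (isFlat_iff_flat hfin)

/-- For a loopless matroid `M` and a set `A ⊆ E` that is not a flat, the face of the
independence system defined by `(A, r(A))_=` is strictly contained in the face defined by
`(cl(A), r(cl(A)))_=`; so `(A, r(A))_≤` is not facet-defining. -/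
theorem face_ssubset_of_not_flat (M : Matroid α) (hfin : M.E.Finite)
    (hloopless : ∀ e ∈ M.E, M.Indep {e})
    (A : Set α) (hA : A ⊆ M.E) (hnotflat : ¬ IsFlat M A) :
    {I : Set α | M.Indep I ∧ (I ∩ A).ncard = rk M A} ⊂
      {I : Set α | M.Indep I ∧ (I ∩ closureOf M A).ncard = rk M A} := by
  rw [closureOf_eq hfin hA]
  have hclE : M.closure A ⊆ M.E := M.closure_subset_ground A
  have hsub : {I : Set α | M.Indep I ∧ (I ∩ A).ncard = rk M A} ⊆
      {I : Set α | M.Indep I ∧ (I ∩ M.closure A).ncard = rk M A} := by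
    rintro I ⟨hI, hcard⟩
    refine ⟨hI, le_antisymm ?_ ?_⟩
    · rw [← rk_closure_eq hfin hA]
      obtain ⟨J, hJ⟩ := M.exists_isBasis (M.closure A) hclE
      rw [rk_eq_basis_ncard hfin hJ hclE]
      exact ncard_le_of_indep_subset hfin hJ hclE (hI.subset inter_subset_left)
        inter_subset_right
    · rw [← hcard]
      exact Set.ncard_le_ncard (inter_subset_inter_right _ (M.subset_closure A hA))
        (hfin.subset ((inter_subset_right).trans hclE))
  refine (Set.ssubset_iff_of_subset hsub).2 ?_
  have hAne : A ≠ M.closure A := by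
    intro h
    exact hnotflat ((isFlat_iff_flat hfin).2 (h ▸ flat_closure M A))
  obtain ⟨e, heCl, heA⟩ := exists_of_ssubset ((M.subset_closure A hA).ssubset_of_ne hAne)
  have heE : e ∈ M.E := hclE heCl
  obtain ⟨J, hJ, heJ⟩ := (hloopless e heE).subset_isBasis_of_subset
    (singleton_subset_iff.2 heCl) hclE
  have hJfin : J.Finite := hfin.subset hJ.indep.subset_ground
  refine ⟨J, ⟨hJ.indep, ?_⟩, ?_⟩
  · rw [inter_eq_self_of_subset_left hJ.subset, ← rk_closure_eq hfin hA,
      rk_eq_basis_ncard hfin hJ hclE]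
  · rintro ⟨-, hc⟩
    have hlt : (J ∩ A).ncard < J.ncard := by
      refine Set.ncard_lt_ncard ⟨inter_subset_left, fun hsub' => heA ?_⟩ hJfin
      exact (hsub' (singleton_subset_iff.1 heJ)).2
    rw [hc, ← rk_closure_eq hfin hA, rk_eq_basis_ncard hfin hJ hclE] at hlt
    exact lt_irrefl _ hlt

end PaperWMO
end

section
/- Let M be a connected simple matroid of rank 3 on a finite ground set E, and let F be a flat of M with r(F) = 2 and |F| ≥ 3. Then the restriction M|F and the contraction M/F are both connected (i.e., every rank-2 flat of size at least 3 is a facet-defining flat of the base system of M). -/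
open Set Matroid

namespace PaperWMO

variable {α : Type*}

lemma rk_bdd (M : Matroid α) (X : Set α) (hfin : M.E.Finite) :
    BddAbove {n : ℕ | ∃ I, M.Indep I ∧ I ⊆ X ∧ I.ncard = n} := by
  refine ⟨M.E.ncard, ?_⟩
  rintro n ⟨J, hJ, -, rfl⟩
  exact Set.ncard_le_ncard hJ.subset_ground hfin

lemma rk_ge (M : Matroid α) {X I : Set α} (hfin : M.E.Finite) (hI : M.Indep I)
    (hIX : I ⊆ X) : I.ncard ≤ rk M X :=
  le_csSup (rk_bdd M X hfin) ⟨I, hI, hIX, rfl⟩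

lemma rk_attained (M : Matroid α) (X : Set α) (hfin : M.E.Finite) :
    ∃ I, M.Indep I ∧ I ⊆ X ∧ I.ncard = rk M X :=
  Nat.sSup_mem (s := {n : ℕ | ∃ I, M.Indep I ∧ I ⊆ X ∧ I.ncard = n})
    ⟨0, ∅, M.empty_indep, empty_subset X, by simp⟩ (rk_bdd M X hfin)

lemma aux_sum (M₁ M₂ : Matroid α) (hd : Disjoint M₁.E M₂.E) {I : Set α}
    (h1 : (M₁.disjointSum M₂ hd).Indep (I ∩ M₁.E))
    (h2 : (M₁.disjointSum M₂ hd).Indep (I ∩ M₂.E))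
    (hsub : I ⊆ M₁.E ∪ M₂.E) : (M₁.disjointSum M₂ hd).Indep I := by
  rw [disjointSum_indep_iff] at h1 h2 ⊢
  refine ⟨?_, ?_, hsub⟩
  · simpa [inter_assoc] using h1.1
  · have := h2.2.1
    simpa [inter_assoc] using this

/-- For a connected simple matroid of rank 3, every rank-2 flat of size at least 3 is
facet-defining: both the restriction and the contraction are connected. -/
theorem rank_two_flat_facet (M : Matroid α) (hfin : M.E.Finite)
    (hconn : Conn M) (hsimple : IsSimple M) (hrank : rk M M.E = 3)
    (F : Set α) (hflat : IsFlat M F) (hrF : rk M F = 2) (hcard : 3 ≤ F.ncard) :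
    Conn (M ↾ F) ∧ Conn (contract M F) := by
  have hFE : F ⊆ M.E := hflat.1
  have hFfin : F.Finite := hfin.subset hFE
  -- every independent set has at most 3 elements; size-3 independent sets are bases
  have base3 : ∀ I : Set α, M.Indep I → I.ncard = 3 → M.IsBase I := by
    intro I hI h3
    obtain ⟨B, hB, hIB⟩ := hI.exists_isBase_superset
    have hBle : B.ncard ≤ 3 := by
      have := rk_ge M hfin hB.indep hB.subset_ground
      rwa [hrank] at this
    have : I = B := Set.eq_of_subset_of_ncard_le hIB (by omega) (hfin.subset hB.subset_ground)
    rwa [this]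
  have base_ncard : ∀ B : Set α, M.IsBase B → B.ncard = 3 := by
    intro B hB
    obtain ⟨I, hI, -, hI3⟩ := rk_attained M M.E hfin
    rw [hrank] at hI3
    exact (hB.ncard_eq_ncard_of_isBase (base3 I hI hI3)).trans hI3
  -- no base inside F
  have hnbF : ∀ B : Set α, M.IsBase B → ¬ B ⊆ F := by
    intro B hB hBF
    have := rk_ge M hfin hB.indep hBF
    rw [hrF, base_ncard B hB] at this
    omega
  -- for each e outside F there is a base inside F ∪ {e}
  have hbase_e : ∀ e ∈ M.E \ F, ∃ B, M.IsBase B ∧ B ⊆ insert e F := by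
    intro e he
    have hsub : insert e F ⊆ M.E := insert_subset he.1 hFE
    have hge : 2 ≤ rk M (insert e F) := by
      obtain ⟨I, hI, hIF, hI2⟩ := rk_attained M F hfin
      rw [hrF] at hI2
      have := rk_ge M hfin hI (hIF.trans (subset_insert e F))
      omega
    have hle : rk M (insert e F) ≤ 3 := by
      obtain ⟨I, hI, hIs, hI3⟩ := rk_attained M (insert e F) hfin
      have := rk_ge M hfin hI hI.subset_ground
      omega
    have hne : rk M (insert e F) ≠ 2 := by
      intro h
      have := hflat.2 (insert e F) (subset_insert _ _) hsub (by rw [h, hrF])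
      exact he.2 (this ▸ mem_insert e F)
    have h3 : rk M (insert e F) = 3 := by omega
    obtain ⟨I, hI, hIs, hI3⟩ := rk_attained M (insert e F) hfin
    rw [h3] at hI3
    exact ⟨I, base3 I hI hI3, hIs⟩
  constructor
  · -- restriction is connected
    constructor
    · rw [restrict_ground_eq]
      exact Set.nonempty_of_ncard_ne_zero (by omega)
    rintro ⟨M₁, M₂, hd, h1, h2, heq⟩
    have hgr : M₁.E ∪ M₂.E = F := by
      rw [← disjointSum_ground_eq (h := hd), ← heq, restrict_ground_eq]
    obtain ⟨x, hx⟩ := h1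
    obtain ⟨y, hy⟩ := h2
    have hxF : x ∈ F := hgr ▸ mem_union_left _ hx
    have hyF : y ∈ F := hgr ▸ mem_union_right _ hy
    have hxy : x ≠ y := fun h => Set.disjoint_left.mp hd hx (h ▸ hy)
    have hz : (F \ {x, y}).Nonempty := by
      rw [Set.nonempty_iff_ne_empty]
      intro h
      rw [Set.diff_eq_empty] at h
      have h1 : F.ncard ≤ ({x, y} : Set α).ncard := Set.ncard_le_ncard h (toFinite _)
      have h2 : ({x, y} : Set α).ncard = 2 := Set.ncard_pair hxy
      omega
    obtain ⟨z, hzF, hzxy⟩ := hz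
    have hzx : z ≠ x := fun h => hzxy (by simp [h])
    have hzy : z ≠ y := fun h => hzxy (by simp [h])
    have hpair : ∀ a b : α, a ∈ F → b ∈ F → (M ↾ F).Indep {a, b} := by
      intro a b ha hb
      rw [restrict_indep_iff]
      refine ⟨hsimple _ (by intro w hw; rcases hw with rfl | rfl; exacts [hFE ha, hFE hb]) ?_,
        by intro w hw; rcases hw with rfl | rfl; exacts [ha, hb]⟩
      calc ({a, b} : Set α).ncard ≤ ({b} : Set α).ncard + 1 := Set.ncard_insert_le a {b}
      _ ≤ 2 := by rw [Set.ncard_singleton]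
    have hxn2 : x ∉ M₂.E := fun h => Set.disjoint_left.mp hd hx h
    have hyn1 : y ∉ M₁.E := fun h => Set.disjoint_left.mp hd h hy
    have hkey : M.Indep {x, y, z} := by
      have hind : (M₁.disjointSum M₂ hd).Indep {x, y, z} := by
        apply aux_sum
        · rcases (hgr ▸ hzF : z ∈ M₁.E ∪ M₂.E) with hz1 | hz2
          · have hxz : (M₁.disjointSum M₂ hd).Indep {x, z} := by
              rw [← heq]; exact hpair x z hxF hzF
            refine hxz.subset ?_
            rintro a ⟨ha, haE⟩
            rcases ha with rfl | rfl | rfl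
            · exact mem_insert _ _
            · exact absurd haE hyn1
            · exact mem_insert_of_mem _ rfl
          · have hxz : (M₁.disjointSum M₂ hd).Indep {x} := by
              rw [← heq]
              have := hpair x x hxF hxF
              rwa [Set.pair_eq_singleton] at this
            refine hxz.subset ?_
            rintro a ⟨ha, haE⟩
            rcases ha with rfl | rfl | rfl
            · exact rfl
            · exact absurd haE hyn1
            · exact absurd haE (fun h => Set.disjoint_left.mp hd h hz2)
        · rcases (hgr ▸ hzF : z ∈ M₁.E ∪ M₂.E) with hz1 | hz2
          · have hyz : (M₁.disjointSum M₂ hd).Indep {y} := by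
              rw [← heq]
              have := hpair y y hyF hyF
              rwa [Set.pair_eq_singleton] at this
            refine hyz.subset ?_
            rintro a ⟨ha, haE⟩
            rcases ha with rfl | rfl | rfl
            · exact absurd haE hxn2
            · exact rfl
            · exact absurd haE (Set.disjoint_left.mp hd hz1)
          · have hyz : (M₁.disjointSum M₂ hd).Indep {y, z} := by
              rw [← heq]; exact hpair y z hyF hzF
            refine hyz.subset ?_
            rintro a ⟨ha, haE⟩
            rcases ha with rfl | rfl | rfl
            · exact absurd haE hxn2
            · exact mem_insert _ _
            · exact mem_insert_of_mem _ rfl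
        · rw [hgr]
          intro a ha
          rcases ha with rfl | rfl | rfl
          exacts [hxF, hyF, hzF]
      rw [← heq, restrict_indep_iff] at hind
      exact hind.1
    have h3 : ({x, y, z} : Set α).ncard = 3 :=
      Set.ncard_eq_three.mpr ⟨x, y, z, hxy, hzx.symm, hzy.symm, rfl⟩
    have := rk_ge M hfin hkey (by intro a ha; rcases ha with rfl | rfl | rfl
                                  exacts [hxF, hyF, hzF])
    rw [hrF, h3] at this
    omega
  · -- contraction is connected
    show Conn ((M✶ ↾ (M.E \ F))✶)
    have hDE : M.E \ F ⊆ M.E := diff_subset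
    have hDne : (M.E \ F).Nonempty := by
      rw [Set.diff_nonempty]
      intro h
      have : F = M.E := hFE.antisymm h
      rw [this, hrank] at hrF
      omega
    have hDdep : ¬ M✶.Indep (M.E \ F) := by
      rw [dual_indep_iff_exists hDE]
      rintro ⟨B, hB, hdisj⟩
      refine hnbF B hB fun a ha => ?_
      have haE : a ∈ M.E := hB.subset_ground ha
      by_contra haF
      exact Set.disjoint_left.mp hdisj ⟨haE, haF⟩ ha
    have hIndepDe : ∀ e ∈ M.E \ F, M✶.Indep ((M.E \ F) \ {e}) := by
      intro e he
      obtain ⟨B, hB, hBsub⟩ := hbase_e e he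
      rw [dual_indep_iff_exists (diff_subset.trans hDE)]
      refine ⟨B, hB, Set.disjoint_left.mpr ?_⟩
      rintro a ⟨⟨haE, haF⟩, hae⟩ haB
      rcases hBsub haB with rfl | h
      · exact hae rfl
      · exact haF h
    have hBasisDe : ∀ e ∈ M.E \ F, M✶.IsBasis ((M.E \ F) \ {e}) (M.E \ F) := by
      intro e he
      rw [isBasis_iff (show M.E \ F ⊆ M✶.E from hDE)]
      refine ⟨hIndepDe e he, diff_subset, ?_⟩
      intro J hJ hsub hJD
      by_contra hne
      apply hDdep
      have heJ : e ∈ J := by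
        obtain ⟨a, haJ, han⟩ := Set.exists_of_ssubset (ssubset_of_subset_of_ne hsub hne)
        have hae : a = e := by
          have haD := hJD haJ
          by_contra h'
          exact han ⟨haD, h'⟩
        rwa [← hae]
      have hJeq : J = M.E \ F := hJD.antisymm (fun a haD => by
        by_cases h : a = e
        · exact h ▸ heJ
        · exact hsub ⟨haD, h⟩)
      exact hJeq ▸ hJ
    have hNbase : ∀ B : Set α, ((M✶ ↾ (M.E \ F))✶).IsBase B ↔ ∃ e ∈ M.E \ F, B = {e} := by
      intro B
      constructor
      · intro hB
        obtain ⟨hb', hBD⟩ := dual_isBase_iff'.mp hB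
        simp only [restrict_ground_eq] at hb' hBD
        have hbasis : M✶.IsBasis ((M.E \ F) \ B) (M.E \ F) := by
          rwa [isBase_restrict_iff (show M.E \ F ⊆ M✶.E from hDE)] at hb'
        obtain ⟨e, heB⟩ : B.Nonempty := by
          rw [Set.nonempty_iff_ne_empty]
          rintro rfl
          rw [diff_empty] at hbasis
          exact hDdep hbasis.indep
        refine ⟨e, hBD heB, ?_⟩
        have hmax := (isBasis_iff (show M.E \ F ⊆ M✶.E from hDE)).mp hbasis
        have hdd : (M.E \ F) \ B = (M.E \ F) \ {e} :=
          hmax.2.2 ((M.E \ F) \ {e}) (hIndepDe e (hBD heB))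
            (Set.diff_subset_diff_right (by simpa using heB)) diff_subset
        calc B = (M.E \ F) \ ((M.E \ F) \ B) := (Set.diff_diff_cancel_left hBD).symm
        _ = (M.E \ F) \ ((M.E \ F) \ {e}) := by rw [hdd]
        _ = {e} := Set.diff_diff_cancel_left (by simpa using hBD heB)
      · rintro ⟨e, heD, rfl⟩
        rw [dual_isBase_iff']
        simp only [restrict_ground_eq]
        refine ⟨?_, by simpa using heD⟩
        rw [isBase_restrict_iff (show M.E \ F ⊆ M✶.E from hDE)]
        exact hBasisDe e heD
    constructor
    · exact hDne
    rintro ⟨M₁, M₂, hd, h1, h2, heq⟩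
    have hgr : M₁.E ∪ M₂.E = M.E \ F := by
      rw [← disjointSum_ground_eq (h := hd), ← heq]
      rfl
    obtain ⟨e, he⟩ := h1
    obtain ⟨f, hf⟩ := h2
    have hef : e ≠ f := fun h => Set.disjoint_left.mp hd he (h ▸ hf)
    have heD : e ∈ M.E \ F := hgr ▸ mem_union_left _ he
    have hfD : f ∈ M.E \ F := hgr ▸ mem_union_right _ hf
    have hbe : ((M✶ ↾ (M.E \ F))✶).IsBase {e} := (hNbase _).mpr ⟨e, heD, rfl⟩
    have hbf : ((M✶ ↾ (M.E \ F))✶).IsBase {f} := (hNbase _).mpr ⟨f, hfD, rfl⟩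
    have hief : ((M✶ ↾ (M.E \ F))✶).Indep {e, f} := by
      rw [heq]
      apply aux_sum
      · have := hbe.indep
        rw [heq] at this
        refine this.subset ?_
        rintro a ⟨ha, haE⟩
        rcases ha with rfl | rfl
        · exact rfl
        · exact absurd haE (fun h => Set.disjoint_left.mp hd h hf)
      · have := hbf.indep
        rw [heq] at this
        refine this.subset ?_
        rintro a ⟨ha, haE⟩
        rcases ha with rfl | rfl
        · exact absurd haE (fun h => Set.disjoint_left.mp hd he h)
        · exact rfl
      · rw [hgr]
        intro a ha
        rcases ha with rfl | rfl
        exacts [heD, hfD]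
    obtain ⟨B, hBb, hsub⟩ := hief.exists_isBase_superset
    obtain ⟨g, -, rfl⟩ := (hNbase B).mp hBb
    have h1 : e = g := hsub (mem_insert _ _)
    have h2 : f = g := hsub (mem_insert_of_mem _ rfl)
    exact hef (h1.trans h2.symm)

end PaperWMO
end
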